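/- arXiv:1706.00814 — 2 statements merged into one kernel-verified Lean document; each statement's English description precedes it below -/
import Mathlib

section
/- Fix real numbers a₁₂, a₂₂ and α > 0 with a₂₂ − a₁₂² ≥ α. For η, μ ∈ ℝ set b(η,μ) = (1/a₂₂)·√(a₂₂(1+μ²) + (a₂₂−a₁₂²)η²) and λ(η,μ) = i·(a₁₂/a₂₂)·η + b(η,μ). Then for each fixed μ the function η ↦ λ(η,μ) is differentiable on ℝ, and |∂λ/∂η (η,μ)| ≤ (|a₁₂| + √(a₂₂ − a₁₂²))/a₂₂ for all η, μ ∈ ℝ; in particular the derivative is bounded by a constant independent of η and μ. -/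
/-- Uniform derivative bound for the root `λ(η,μ)` (the scalar estimate behind
the Mihlin-type multiplier conditions in Lemma 5.2): for each fixed `μ` the map
`η ↦ λ(η,μ)` is differentiable and its derivative is bounded by
`(|a₁₂| + √(a₂₂ − a₁₂²))/a₂₂`, independently of `η` and `μ`. -/
theorem stmt_6 (a₁₂ a₂₂ α : ℝ) (hα : 0 < α) (hell : a₂₂ - a₁₂ ^ 2 ≥ α)
    (b : ℝ → ℝ → ℝ)
    (hb : ∀ η μ, b η μ = (1 / a₂₂) * Real.sqrt (a₂₂ * (1 + μ ^ 2) + (a₂₂ - a₁₂ ^ 2) * η ^ 2))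
    (lam : ℝ → ℝ → ℂ)
    (hlam : ∀ η μ, lam η μ = Complex.I * ((a₁₂ : ℂ) / (a₂₂ : ℂ)) * (η : ℂ) + (b η μ : ℂ)) :
    ∀ μ : ℝ, Differentiable ℝ (fun η => lam η μ) ∧
      ∀ η : ℝ, ‖deriv (fun η' => lam η' μ) η‖ ≤
        (|a₁₂| + Real.sqrt (a₂₂ - a₁₂ ^ 2)) / a₂₂ := by
  set c := a₂₂ - a₁₂ ^ 2 with hc
  have hc0 : 0 < c := lt_of_lt_of_le hα hell
  have ha22 : 0 < a₂₂ := by nlinarith [sq_nonneg a₁₂]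
  intro μ
  set f : ℝ → ℝ := fun η => a₂₂ * (1 + μ ^ 2) + c * η ^ 2 with hf
  have hfpos : ∀ η, 0 < f η := by
    intro η
    have hfe : f η = a₂₂ * (1 + μ ^ 2) + c * η ^ 2 := rfl
    rw [hfe]
    nlinarith [sq_nonneg η, sq_nonneg μ]
  have hd : ∀ η, HasDerivAt (fun η' => lam η' μ)
      (Complex.I * ((a₁₂ : ℂ) / (a₂₂ : ℂ)) +
        (((1 / a₂₂) * (c * η / Real.sqrt (f η)) : ℝ) : ℂ)) η := by
    intro η
    have hfd : HasDerivAt f (2 * (c * η)) η := by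
      have := ((hasDerivAt_pow 2 η).const_mul c).const_add (a₂₂ * (1 + μ ^ 2))
      simpa [hf, mul_comm, mul_assoc, mul_left_comm] using this
    have hsq : HasDerivAt (fun η' => Real.sqrt (f η'))
        (c * η / Real.sqrt (f η)) η := by
      have := hfd.sqrt (ne_of_gt (hfpos η))
      have h2 : 2 * (c * η) / (2 * Real.sqrt (f η)) = c * η / Real.sqrt (f η) := by
        rw [mul_div_mul_left _ _ (two_ne_zero)]
      simpa [h2] using this
    have hbd : HasDerivAt (fun η' => ((b η' μ : ℝ) : ℂ))
        (((1 / a₂₂) * (c * η / Real.sqrt (f η)) : ℝ) : ℂ) η := by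
      have hr : HasDerivAt (fun η' => (1 / a₂₂) * Real.sqrt (f η'))
          ((1 / a₂₂) * (c * η / Real.sqrt (f η))) η := hsq.const_mul _
      have : HasDerivAt (fun η' => (((1 / a₂₂) * Real.sqrt (f η') : ℝ) : ℂ))
          (((1 / a₂₂) * (c * η / Real.sqrt (f η)) : ℝ) : ℂ) η := hr.ofReal_comp
      refine this.congr_of_eventuallyEq ?_
      filter_upwards with x
      rw [hb]
    have hlin : HasDerivAt (fun η' : ℝ => Complex.I * ((a₁₂ : ℂ) / (a₂₂ : ℂ)) * (η' : ℂ))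
        (Complex.I * ((a₁₂ : ℂ) / (a₂₂ : ℂ))) η := by
      have h1 : HasDerivAt (fun η' : ℝ => ((η' : ℝ) : ℂ)) 1 η :=
        Complex.ofRealCLM.hasDerivAt
      simpa using h1.const_mul (Complex.I * ((a₁₂ : ℂ) / (a₂₂ : ℂ)))
    have := hlin.add hbd
    refine this.congr_of_eventuallyEq ?_
    filter_upwards with x
    rw [hlam]
    rfl
  constructor
  · intro η; exact (hd η).differentiableAt
  · intro η
    rw [(hd η).deriv]
    have habs : ‖Complex.I * ((a₁₂ : ℂ) / (a₂₂ : ℂ)) +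
        (((1 / a₂₂) * (c * η / Real.sqrt (f η)) : ℝ) : ℂ)‖ ≤
        |a₁₂| / a₂₂ + |(1 / a₂₂) * (c * η / Real.sqrt (f η))| := by
      refine le_trans (norm_add_le _ _) ?_
      gcongr
      · rw [norm_mul, Complex.norm_I, one_mul, norm_div, Complex.norm_real,
          Complex.norm_real, Real.norm_eq_abs, Real.norm_eq_abs, abs_of_pos ha22]
      · rw [Complex.norm_real, Real.norm_eq_abs]
    refine habs.trans ?_
    have hbd2 : |(1 / a₂₂) * (c * η / Real.sqrt (f η))| ≤ Real.sqrt c / a₂₂ := by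
      have hsf : 0 < Real.sqrt (f η) := Real.sqrt_pos.mpr (hfpos η)
      rw [abs_mul, abs_of_pos (by positivity : (0:ℝ) < 1 / a₂₂), abs_div,
        abs_of_pos hsf, abs_mul, abs_of_pos hc0]
      have key : c * |η| ≤ Real.sqrt c * Real.sqrt (f η) := by
        have h1 : Real.sqrt (c * η ^ 2) ≤ Real.sqrt (f η) := by
          apply Real.sqrt_le_sqrt
          have : 0 < a₂₂ * (1 + μ ^ 2) := by nlinarith [sq_nonneg μ]
          simp only [hf]; linarith
        have h2 : Real.sqrt (c * η ^ 2) = Real.sqrt c * |η| := by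
          rw [Real.sqrt_mul hc0.le, Real.sqrt_sq_eq_abs]
        have h3 : c = Real.sqrt c * Real.sqrt c := (Real.mul_self_sqrt hc0.le).symm
        calc c * |η| = Real.sqrt c * (Real.sqrt c * |η|) := by rw [← mul_assoc, ← h3]
          _ ≤ Real.sqrt c * Real.sqrt (f η) := by
              apply mul_le_mul_of_nonneg_left _ (Real.sqrt_nonneg c)
              rw [← h2]; exact h1
      have h4 : c * |η| / Real.sqrt (f η) ≤ Real.sqrt c := (div_le_iff₀ hsf).mpr key
      calc 1 / a₂₂ * (c * |η| / Real.sqrt (f η)) ≤ 1 / a₂₂ * Real.sqrt c := by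
            exact mul_le_mul_of_nonneg_left h4 (by positivity)
        _ = Real.sqrt c / a₂₂ := by ring
    calc |a₁₂| / a₂₂ + |(1 / a₂₂) * (c * η / Real.sqrt (f η))|
        ≤ |a₁₂| / a₂₂ + Real.sqrt c / a₂₂ := by linarith
      _ = (|a₁₂| + Real.sqrt c) / a₂₂ := by ring
end

section
/- Let a > 0, α > 0, and a₁₂, a₂₂ ∈ ℝ with a₂₂ − a₁₂² ≥ α. Fix η, μ ∈ ℝ and set κ = (−i·a₁₂·η + √(a₂₂(a+μ²) + (a₂₂−a₁₂²)η²))/a₂₂. Then: (i) Re κ > 0; (ii) for any ψ₀ ∈ ℂ, the function u(y) = e^(−κy)·ψ₀ is bounded on [0,∞), tends to 0 as y → ∞, satisfies u(0) = ψ₀, and solves the ODE −a₂₂·u''(y) + 2a₁₂·i·η·u'(y) + (a + η² + μ²)·u(y) = 0 for all y > 0; (iii) conversely, every bounded twice continuously differentiable function u : [0,∞) → ℂ solving this ODE on (0,∞) with u(0) = ψ₀ equals y ↦ e^(−κy)·ψ₀. -/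
open Complex

lemma aux_hdexp (c : ℂ) (y : ℝ) :
    HasDerivAt (fun t : ℝ => Complex.exp (c * t)) (c * Complex.exp (c * y)) y := by
  have h0 : HasDerivAt (fun t : ℝ => ((t : ℝ) : ℂ)) 1 y := by
    simpa using (hasDerivAt_id y).ofReal_comp
  simpa [mul_comm] using (h0.const_mul c).cexp

lemma aux_const {f : ℝ → ℂ} (hf : ∀ y : ℝ, 0 < y → HasDerivAt f 0 y)
    {y : ℝ} (hy : 0 < y) : f y = f 1 := by
  rcases le_total y 1 with h | h
  · have := constant_of_has_deriv_right_zero (f := f) (a := y) (b := 1)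
      (fun x hx => ((hf x (lt_of_lt_of_le hy hx.1)).continuousAt).continuousWithinAt)
      (fun x hx => (hf x (lt_of_lt_of_le hy hx.1)).hasDerivWithinAt)
    exact (this 1 ⟨h, le_rfl⟩).symm
  · have := constant_of_has_deriv_right_zero (f := f) (a := 1) (b := y)
      (fun x hx => ((hf x (lt_of_lt_of_le one_pos hx.1)).continuousAt).continuousWithinAt)
      (fun x hx => (hf x (lt_of_lt_of_le one_pos hx.1)).hasDerivWithinAt)
    exact this y ⟨h, le_rfl⟩

/-- Scalar core of Lemma 5.1: with `κ` the root with positive real part of the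
characteristic polynomial, (i) `Re κ > 0`; (ii) `u(y) = e^{−κy}ψ₀` is bounded on
`[0,∞)`, tends to `0` at `∞`, satisfies `u(0) = ψ₀` and solves the ODE
`−a₂₂u'' + 2a₁₂iηu' + (a + η² + μ²)u = 0` on `(0,∞)`; (iii) it is the unique
bounded twice continuously differentiable solution with value `ψ₀` at `0`. -/
theorem stmt_8 (a α a₁₂ a₂₂ : ℝ) (ha : 0 < a) (hα : 0 < α) (hell : a₂₂ - a₁₂ ^ 2 ≥ α)
    (η μ : ℝ)
    (κ : ℂ)
    (hκ : κ = (-Complex.I * (a₁₂ : ℂ) * (η : ℂ) +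
        ((Real.sqrt (a₂₂ * (a + μ ^ 2) + (a₂₂ - a₁₂ ^ 2) * η ^ 2) : ℝ) : ℂ)) / (a₂₂ : ℂ))
    (ψ₀ : ℂ) :
    (0 < κ.re) ∧
    ((∃ M : ℝ, ∀ y : ℝ, 0 ≤ y → ‖Complex.exp (-κ * (y : ℂ)) * ψ₀‖ ≤ M) ∧
      Filter.Tendsto (fun y : ℝ => Complex.exp (-κ * (y : ℂ)) * ψ₀)
        Filter.atTop (nhds 0) ∧
      Complex.exp (-κ * ((0 : ℝ) : ℂ)) * ψ₀ = ψ₀ ∧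
      (∀ y : ℝ, 0 < y →
        -(a₂₂ : ℂ) * deriv (deriv (fun t : ℝ => Complex.exp (-κ * (t : ℂ)) * ψ₀)) y
          + 2 * (a₁₂ : ℂ) * Complex.I * (η : ℂ) *
              deriv (fun t : ℝ => Complex.exp (-κ * (t : ℂ)) * ψ₀) y
          + ((a : ℂ) + (η : ℂ) ^ 2 + (μ : ℂ) ^ 2) * (Complex.exp (-κ * (y : ℂ)) * ψ₀) = 0)) ∧
    (∀ v : ℝ → ℂ,
      ContinuousOn v (Set.Ici 0) →
      (∀ y : ℝ, 0 < y → ContDiffAt ℝ 2 v y) →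
      (∃ M : ℝ, ∀ y : ℝ, 0 ≤ y → ‖v y‖ ≤ M) →
      v 0 = ψ₀ →
      (∀ y : ℝ, 0 < y →
        -(a₂₂ : ℂ) * deriv (deriv v) y
          + 2 * (a₁₂ : ℂ) * Complex.I * (η : ℂ) * deriv v y
          + ((a : ℂ) + (η : ℂ) ^ 2 + (μ : ℂ) ^ 2) * v y = 0) →
      ∀ y : ℝ, 0 ≤ y → v y = Complex.exp (-κ * (y : ℂ)) * ψ₀) := by
  have ha22 : (0:ℝ) < a₂₂ := by nlinarith [sq_nonneg a₁₂]
  have hD : (0:ℝ) < a₂₂ * (a + μ ^ 2) + (a₂₂ - a₁₂ ^ 2) * η ^ 2 := by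
    nlinarith [sq_nonneg η, sq_nonneg μ]
  set s : ℝ := Real.sqrt (a₂₂ * (a + μ ^ 2) + (a₂₂ - a₁₂ ^ 2) * η ^ 2) with hs_def
  have hspos : 0 < s := Real.sqrt_pos.2 hD
  have hs2 : s ^ 2 = a₂₂ * (a + μ ^ 2) + (a₂₂ - a₁₂ ^ 2) * η ^ 2 := Real.sq_sqrt hD.le
  have hs2' : ((s : ℝ) : ℂ) ^ 2
      = (a₂₂:ℂ) * ((a:ℂ) + (μ:ℂ) ^ 2) + ((a₂₂:ℂ) - (a₁₂:ℂ) ^ 2) * (η:ℂ) ^ 2 := by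
    rw [← Complex.ofReal_pow, hs2]; push_cast; ring
  have h22 : (a₂₂ : ℂ) ≠ 0 := by exact_mod_cast ha22.ne'
  have hrepos : 0 < κ.re := by
    have : κ.re = s / a₂₂ := by
      rw [hκ, Complex.div_ofReal_re]; congr 1; simp
    rw [this]; exact div_pos hspos ha22
  have hchar : (a₂₂ : ℂ) * κ ^ 2 + 2 * a₁₂ * Complex.I * η * κ
      = (a : ℂ) + (η:ℂ) ^ 2 + (μ:ℂ) ^ 2 := by
    rw [hκ]
    field_simp
    linear_combination hs2' - (a₁₂:ℂ)^2 * (η:ℂ)^2 * Complex.I_sq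
  -- derivatives of the explicit solution
  have hu' : ∀ t : ℝ, HasDerivAt (fun t : ℝ => Complex.exp (-κ * (t : ℂ)) * ψ₀)
      (-κ * (Complex.exp (-κ * (t : ℂ)) * ψ₀)) t := fun t => by
    simpa [mul_assoc] using (aux_hdexp (-κ) t).mul_const ψ₀
  have hderiv1 : deriv (fun t : ℝ => Complex.exp (-κ * (t : ℂ)) * ψ₀)
      = fun t : ℝ => -κ * (Complex.exp (-κ * (t : ℂ)) * ψ₀) :=
    funext fun t => (hu' t).deriv
  refine ⟨hrepos, ⟨⟨‖ψ₀‖, ?_⟩, ?_, by simp, ?_⟩, ?_⟩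
  · -- boundedness
    intro y hy
    rw [norm_mul, Complex.norm_exp]
    have hre : (-κ * (y:ℂ)).re = -(κ.re * y) := by simp [Complex.mul_re]
    refine mul_le_of_le_one_left (norm_nonneg _) ?_
    rw [hre, Real.exp_le_one_iff]
    nlinarith
  · -- tendsto 0
    rw [tendsto_zero_iff_norm_tendsto_zero]
    have h0 : Filter.Tendsto (fun y : ℝ => κ.re * y) Filter.atTop Filter.atTop :=
      Filter.Tendsto.const_mul_atTop hrepos Filter.tendsto_id
    have h2 : Filter.Tendsto (fun y : ℝ => Real.exp (-(κ.re * y))) Filter.atTop (nhds 0) :=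
      Real.tendsto_exp_atBot.comp (Filter.tendsto_neg_atBot_iff.2 h0)
    have h3 : ∀ y : ℝ, Real.exp (-(κ.re * y)) * ‖ψ₀‖ = ‖Complex.exp (-κ * (y:ℂ)) * ψ₀‖ :=
      fun y => by
        rw [norm_mul, Complex.norm_exp]
        congr 2
        simp [Complex.mul_re]
    simpa using (h2.mul_const ‖ψ₀‖).congr h3
  · -- ODE for explicit solution
    intro y hy
    have hd2 : deriv (deriv (fun t : ℝ => Complex.exp (-κ * (t : ℂ)) * ψ₀)) y
        = -κ * (-κ * (Complex.exp (-κ * (y : ℂ)) * ψ₀)) := by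
      rw [hderiv1]
      exact (((hu' y)).const_mul (-κ)).deriv
    rw [hd2, hderiv1]
    linear_combination (-(Complex.exp (-κ * (y:ℂ)) * ψ₀)) * hchar
  · -- uniqueness
    intro v hvcont hvC2 hvbdd hv0 hODE
    set lp : ℂ := (Complex.I * (a₁₂ : ℂ) * (η : ℂ) + ((s:ℝ):ℂ)) / (a₂₂:ℂ) with hlp
    have hml : lp - κ = 2 * (a₁₂:ℂ) * Complex.I * (η:ℂ) / (a₂₂:ℂ) := by
      rw [hlp, hκ]; field_simp; ring
    have hmk : lp * κ = ((a : ℂ) + (η:ℂ) ^ 2 + (μ:ℂ) ^ 2) / (a₂₂:ℂ) := by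
      rw [hlp, hκ, div_mul_div_comm, div_eq_div_iff (mul_ne_zero h22 h22) h22]
      linear_combination hs2' * (a₂₂:ℂ) - (a₁₂:ℂ)^2 * (η:ℂ)^2 * (a₂₂:ℂ) * Complex.I_sq
    have hsum : lp + κ = ((2 * s / a₂₂ : ℝ) : ℂ) := by
      rw [hlp, hκ]; push_cast; ring
    have hsumne : lp + κ ≠ 0 := by
      rw [hsum]
      exact_mod_cast (by positivity : (0:ℝ) < 2 * s / a₂₂).ne'
    have hlre : lp.re = s / a₂₂ := by
      rw [hlp, Complex.div_ofReal_re]; congr 1; simp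
    -- derivatives of v
    have hv1 : ∀ y : ℝ, 0 < y → HasDerivAt v (deriv v y) y := fun y hy =>
      ((hvC2 y hy).differentiableAt (by norm_num)).hasDerivAt
    have hv2 : ∀ y : ℝ, 0 < y → HasDerivAt (deriv v) (deriv (deriv v) y) y := by
      intro y hy
      have h1 : ContDiffAt ℝ 1 (fun x : ℝ => fderiv ℝ v x 1) y :=
        ((hvC2 y hy).fderiv_right (by norm_num)).clm_apply contDiffAt_const
      have h2 : ContDiffAt ℝ 1 (deriv v) y := by
        exact h1
      exact (h2.differentiableAt one_ne_zero).hasDerivAt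
    -- the function g = v' + κ v satisfies g' = lp g
    set g : ℝ → ℂ := fun y => deriv v y + κ * v y with hg_def
    have hg' : ∀ y : ℝ, 0 < y → HasDerivAt g (lp * g y) y := by
      intro y hy
      have h1 : HasDerivAt g (deriv (deriv v) y + κ * deriv v y) y :=
        (hv2 y hy).add ((hv1 y hy).const_mul κ)
      have hD2 : deriv (deriv v) y = (2 * (a₁₂:ℂ) * Complex.I * (η:ℂ) * deriv v y
          + ((a : ℂ) + (η:ℂ) ^ 2 + (μ:ℂ) ^ 2) * v y) / (a₂₂:ℂ) := by
        rw [eq_div_iff h22]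
        linear_combination -hODE y hy
      have : deriv (deriv v) y + κ * deriv v y = lp * g y := by
        rw [hg_def]
        linear_combination hD2 - (deriv v y) * hml - (v y) * hmk
      rwa [this] at h1
    -- h = exp(-lp y) g y is constant on (0, ∞)
    set h : ℝ → ℂ := fun y => Complex.exp (-lp * y) * g y with hh_def
    have hh' : ∀ y : ℝ, 0 < y → HasDerivAt h 0 y := by
      intro y hy
      have := ((aux_hdexp (-lp) y).mul (hg' y hy))
      have heq : -lp * Complex.exp (-lp * y) * g y + Complex.exp (-lp * y) * (lp * g y) = 0 := by
        ring
      rwa [heq] at this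
    set C : ℂ := h 1 with hC_def
    have hgC : ∀ y : ℝ, 0 < y → g y = C * Complex.exp (lp * y) := by
      intro y hy
      have h1 : Complex.exp (-lp * y) * g y = C := aux_const hh' hy
      have e0 : lp * (y:ℂ) + -lp * (y:ℂ) = 0 := by ring
      calc g y = Complex.exp (lp * y) * (Complex.exp (-lp * y) * g y) := by
            rw [← mul_assoc, ← Complex.exp_add, e0, Complex.exp_zero, one_mul]
        _ = Complex.exp (lp * y) * C := by rw [h1]
        _ = C * Complex.exp (lp * y) := mul_comm _ _
    -- q = exp(κ y) v y - C' exp((lp + κ) y) is constant on (0, ∞)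
    set C' : ℂ := C / (lp + κ) with hC'_def
    set q : ℝ → ℂ := fun y => Complex.exp (κ * y) * v y - C' * Complex.exp ((lp + κ) * y)
      with hq_def
    have hq' : ∀ y : ℝ, 0 < y → HasDerivAt q 0 y := by
      intro y hy
      have h1 := ((aux_hdexp κ y).mul (hv1 y hy)).sub
        (((aux_hdexp (lp + κ) y).const_mul C'))
      have hCC : C' * (lp + κ) = C := div_mul_cancel₀ C hsumne
      have heq : κ * Complex.exp (κ * y) * v y + Complex.exp (κ * y) * deriv v y
          - C' * ((lp + κ) * Complex.exp ((lp + κ) * y)) = 0 := by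
        have hgy := hgC y hy
        have hsplit : Complex.exp ((lp + κ) * (y:ℂ)) =
            Complex.exp (κ * y) * Complex.exp (lp * y) := by
          rw [← Complex.exp_add]; congr 1; ring
        rw [hsplit]
        have : κ * Complex.exp (κ * y) * v y + Complex.exp (κ * y) * deriv v y
            = Complex.exp (κ * y) * g y := by rw [hg_def]; ring
        rw [this, hgy]
        linear_combination -(Complex.exp (κ*(y:ℂ)) * Complex.exp (lp*(y:ℂ))) * hCC
      rwa [heq] at h1
    set Q : ℂ := q 1 with hQ_def
    have hv_form : ∀ y : ℝ, 0 < y →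
        v y = Q * Complex.exp (-κ * y) + C' * Complex.exp (lp * y) := by
      intro y hy
      have h1 : q y = Q := aux_const hq' hy
      have h2 : Complex.exp (κ * (y:ℂ)) * v y = Q + C' * Complex.exp ((lp + κ) * y) := by
        rw [← h1, hq_def]; ring
      have hE : Complex.exp (κ * (y:ℂ)) ≠ 0 := Complex.exp_ne_zero _
      apply mul_left_cancel₀ hE
      rw [h2]
      have e1 : Complex.exp (κ * (y:ℂ)) * Complex.exp (-κ * (y:ℂ)) = 1 := by
        rw [← Complex.exp_add, show κ * (y:ℂ) + -κ * (y:ℂ) = 0 by ring, Complex.exp_zero]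
      have e2 : Complex.exp (κ * (y:ℂ)) * Complex.exp (lp * (y:ℂ))
          = Complex.exp ((lp + κ) * (y:ℂ)) := by
        rw [← Complex.exp_add]; congr 1; ring
      calc Q + C' * Complex.exp ((lp + κ) * (y:ℂ))
          = Q * (Complex.exp (κ * (y:ℂ)) * Complex.exp (-κ * (y:ℂ)))
            + C' * (Complex.exp (κ * (y:ℂ)) * Complex.exp (lp * (y:ℂ))) := by rw [e1, e2]; ring
        _ = Complex.exp (κ * (y:ℂ)) *
            (Q * Complex.exp (-κ * (y:ℂ)) + C' * Complex.exp (lp * (y:ℂ))) := by ring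
    -- boundedness forces C' = 0
    obtain ⟨M, hM⟩ := hvbdd
    have hC'0 : C' = 0 := by
      by_contra hC'ne
      have hC'pos : 0 < ‖C'‖ := by
        simpa [norm_pos_iff] using hC'ne
      have habs : ∀ y : ℝ, 0 < y →
          ‖C'‖ * Real.exp (s / a₂₂ * y) ≤ M + ‖Q‖ := by
        intro y hy
        have h1 := hv_form y hy
        have h2 : C' * Complex.exp (lp * y) = v y - Q * Complex.exp (-κ * y) := by
          rw [h1]; ring
        have h3 : ‖C' * Complex.exp (lp * (y:ℂ))‖
            = ‖C'‖ * Real.exp (s / a₂₂ * y) := by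
          rw [norm_mul, Complex.norm_exp]
          congr 2
          rw [Complex.mul_re]
          simp [hlre]
        have h4 : ‖Q * Complex.exp (-κ * (y:ℂ))‖ ≤ ‖Q‖ := by
          rw [norm_mul, Complex.norm_exp]
          refine mul_le_of_le_one_right (norm_nonneg _) ?_
          rw [show (-κ * (y:ℂ)).re = -(κ.re * y) by simp [Complex.mul_re],
            Real.exp_le_one_iff]
          nlinarith
        calc ‖C'‖ * Real.exp (s / a₂₂ * y)
            = ‖C' * Complex.exp (lp * (y:ℂ))‖ := h3.symm
          _ = ‖v y - Q * Complex.exp (-κ * (y:ℂ))‖ := by rw [h2]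
          _ ≤ ‖v y‖ + ‖Q * Complex.exp (-κ * (y:ℂ))‖ := by
              simpa using norm_sub_le (v y) (Q * Complex.exp (-κ * (y:ℂ)))
          _ ≤ M + ‖Q‖ := add_le_add (hM y hy.le) h4
      have hT : Filter.Tendsto
          (fun y : ℝ => ‖C'‖ * Real.exp (s / a₂₂ * y)) Filter.atTop Filter.atTop :=
        Filter.Tendsto.const_mul_atTop hC'pos
          (Real.tendsto_exp_atTop.comp
            (Filter.Tendsto.const_mul_atTop (div_pos hspos ha22) Filter.tendsto_id))
      obtain ⟨y, hy1, hy2⟩ :=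
        ((hT.eventually_gt_atTop (M + ‖Q‖)).and
          (Filter.eventually_gt_atTop 0)).exists
      exact absurd (habs y hy2) (not_le.2 hy1)
    have hv_form2 : ∀ y : ℝ, 0 < y → v y = Q * Complex.exp (-κ * y) := by
      intro y hy
      rw [hv_form y hy, hC'0]; ring
    -- continuity at 0 forces Q = ψ₀
    have hQψ : Q = ψ₀ := by
      have hlim1 : Filter.Tendsto v (nhdsWithin 0 (Set.Ioi 0)) (nhds ψ₀) := by
        have := (hvcont 0 (Set.self_mem_Ici)).tendsto
        rw [hv0] at this
        exact this.mono_left (nhdsWithin_mono 0 Set.Ioi_subset_Ici_self)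
      have hlim2 : Filter.Tendsto (fun y : ℝ => Q * Complex.exp (-κ * y))
          (nhdsWithin 0 (Set.Ioi 0)) (nhds Q) := by
        have hc : Continuous (fun y : ℝ => Q * Complex.exp (-κ * y)) :=
          continuous_const.mul (Complex.continuous_exp.comp (continuous_const.mul Complex.continuous_ofReal))
        have := (hc.tendsto 0).mono_left (nhdsWithin_le_nhds (s := Set.Ioi (0:ℝ)))
        simpa using this
      have heq : v =ᶠ[nhdsWithin 0 (Set.Ioi 0)] fun y : ℝ => Q * Complex.exp (-κ * y) :=
        Filter.eventuallyEq_of_mem self_mem_nhdsWithin (fun y hy => hv_form2 y hy)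
      exact (tendsto_nhds_unique (hlim1.congr' heq) hlim2).symm
    intro y hy
    rcases eq_or_lt_of_le hy with hy0 | hy0
    · rw [← hy0, hv0]; simp
    · rw [hv_form2 y hy0, hQψ]; ring
end
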